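/- Let E be a real normed vector space, let γ, T ∈ ℝ, and let J : ℝ → (E →L[ℝ] E) be a family of continuous linear maps. Suppose a : ℝ → E is twice differentiable and satisfies the damped second-order equation a''(t) − γ·a'(t) = J(t)(a(t)) for all t ∈ ℝ. Define b : ℝ → E by b(τ) = a(T − τ). Then b is twice differentiable and satisfies b''(τ) + γ·b'(τ) = J(T − τ)(b(τ)) for all τ ∈ ℝ. (Hence the time-reversed adjoint equation of a heavy-ball ODE is again a heavy-ball ODE with the same damping parameter γ.) -/

import Mathlib

/-- The time-reversed adjoint equation of a heavy-ball ODE is again a heavy-ball ODE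
with the same damping parameter `γ`. -/
theorem stmt_0 {E : Type*} [NormedAddCommGroup E] [NormedSpace ℝ E]
    (γ T : ℝ) (J : ℝ → (E →L[ℝ] E)) (a a' a'' : ℝ → E)
    (ha' : ∀ t : ℝ, HasDerivAt a (a' t) t)
    (ha'' : ∀ t : ℝ, HasDerivAt a' (a'' t) t)
    (heq : ∀ t : ℝ, a'' t - γ • a' t = J t (a t)) :
    ∃ b' b'' : ℝ → E,
      (∀ τ : ℝ, HasDerivAt (fun τ => a (T - τ)) (b' τ) τ) ∧
      (∀ τ : ℝ, HasDerivAt b' (b'' τ) τ) ∧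
      (∀ τ : ℝ, b'' τ + γ • b' τ = J (T - τ) (a (T - τ))) := by
  have hg : ∀ τ : ℝ, HasDerivAt (fun τ : ℝ => T - τ) (-1) τ := by
    intro τ
    simpa using (hasDerivAt_id' τ).const_sub T
  refine ⟨fun τ => (-1 : ℝ) • a' (T - τ), fun τ => a'' (T - τ), ?_, ?_, ?_⟩
  · intro τ
    exact (ha' (T - τ)).scomp τ (hg τ)
  · intro τ
    have := ((ha'' (T - τ)).scomp τ (hg τ)).const_smul (-1 : ℝ)
    simpa [smul_smul, Function.comp_def, Pi.neg_def] using this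
  · intro τ
    have := heq (T - τ)
    rw [← this]
    simp [smul_smul]
    abel
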